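/- For d ≥ 3 let g = y^{d−1}z − x^d ∈ k[x,y,z]. Then g is irreducible of degree d, and the set {(0,0,0), (0,0,1)} ∪ {(x,y,z) ∈ 𝔸³ : g(x,y,z) ≠ 0} is a Kakeya subset of 𝔸³(k). -/

import Mathlib

/-- A subset `E ⊆ 𝔸ⁿ(k) = kⁿ` is a Kakeya subset if for every nonzero direction `v`
there is a point `p` such that the line `{p + t • v : t ∈ k}` is contained in `E`. -/
def IsKakeya {k : Type*} [Field k] {n : ℕ} (E : Set (Fin n → k)) : Prop :=
  ∀ v : Fin n → k, v ≠ 0 → ∃ p : Fin n → k, ∀ t : k, p + t • v ∈ E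

/-- A linear polynomial `C a * X + C b` with `a ≠ 0` whose coefficients have only
unit common divisors is irreducible. -/
lemma linear_irreducible_aux {R : Type*} [CommRing R] [IsDomain R] {a b : R} (ha : a ≠ 0)
    (hcop : ∀ r : R, r ∣ a → r ∣ b → IsUnit r) :
    Irreducible (Polynomial.C a * Polynomial.X + Polynomial.C b) := by
  set p : Polynomial R := Polynomial.C a * Polynomial.X + Polynomial.C b with hp
  have hdeg : p.natDegree = 1 := Polynomial.natDegree_linear ha
  have hC : ∀ r : R, Polynomial.C r ∣ p → IsUnit r := by
    intro r ⟨w, hw⟩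
    refine hcop r ?_ ?_
    · have : p.coeff 1 = r * w.coeff 1 := by rw [hw, Polynomial.coeff_C_mul]
      have h1 : p.coeff 1 = a := by simp [hp]
      exact ⟨w.coeff 1, by rw [← h1, this]⟩
    · have : p.coeff 0 = r * w.coeff 0 := by rw [hw, Polynomial.coeff_C_mul]
      have h0 : p.coeff 0 = b := by simp [hp]
      exact ⟨w.coeff 0, by rw [← h0, this]⟩
  constructor
  · intro hu
    have := Polynomial.natDegree_eq_zero_of_isUnit hu
    omega
  · intro u w huw
    have hu0 : u ≠ 0 := by rintro rfl; simp at huw; rw [huw] at hdeg; simp at hdeg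
    have hw0 : w ≠ 0 := by rintro rfl; simp at huw; rw [huw] at hdeg; simp at hdeg
    have hsum : u.natDegree + w.natDegree = 1 := by
      rw [← Polynomial.natDegree_mul hu0 hw0, ← huw, hdeg]
    rcases Nat.eq_zero_or_pos u.natDegree with h | h
    · left
      have := Polynomial.eq_C_of_natDegree_eq_zero h
      rw [this, Polynomial.isUnit_C]
      exact hC _ ⟨w, by rw [← this, huw]⟩
    · right
      have hw1 : w.natDegree = 0 := by omega
      have := Polynomial.eq_C_of_natDegree_eq_zero hw1
      rw [this, Polynomial.isUnit_C]
      exact hC _ ⟨u, by rw [← this, huw, mul_comm]⟩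

open MvPolynomial in
lemma prime_X_zero_aux {k : Type*} [Field k] : Prime (X 0 : MvPolynomial (Fin 2) k) := by
  refine (MulEquiv.prime_iff (finSuccEquiv k 1).toMulEquiv).1 ?_
  show Prime ((finSuccEquiv k 1) (X 0))
  rw [finSuccEquiv_X_zero]
  exact Polynomial.prime_X

open MvPolynomial in
lemma coprime_aux {k : Type*} [Field k] {m n : ℕ}
    (r : MvPolynomial (Fin 2) k) (h0 : r ∣ X 0 ^ m) (h1 : r ∣ X 1 ^ n) : IsUnit r := by
  by_contra hu
  have hr0 : r ≠ 0 := by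
    rintro rfl
    exact pow_ne_zero m (X_ne_zero (0 : Fin 2)) (zero_dvd_iff.mp h0)
  obtain ⟨q, hqirr, hqr⟩ := WfDvdMonoid.exists_irreducible_factor hu hr0
  have hq : Prime q := (UniqueFactorizationMonoid.irreducible_iff_prime).1 hqirr
  have hqX0 : q ∣ X 0 := hq.dvd_of_dvd_pow (hqr.trans h0)
  have hX0q : Associated q (X 0 : MvPolynomial (Fin 2) k) :=
    hqirr.associated_of_dvd prime_X_zero_aux.irreducible hqX0
  have hX01 : (X 0 : MvPolynomial (Fin 2) k) ∣ X 1 :=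
    prime_X_zero_aux.dvd_of_dvd_pow (hX0q.symm.dvd.trans (hqr.trans h1))
  have h := map_dvd (eval (fun i : Fin 2 => if i = 0 then (0 : k) else 1)) hX01
  rw [eval_X, eval_X, if_pos rfl, if_neg (by decide), zero_dvd_iff] at h
  exact one_ne_zero h

open MvPolynomial in
/-- For `d ≥ 3` let `g = y^(d-1) * z - x^d ∈ k[x,y,z]` (with `x = X 0`, `y = X 1`, `z = X 2`).
Then `g` is irreducible of degree `d`, and `{(0,0,0), (0,0,1)} ∪ {g ≠ 0}` is a Kakeya subset
of `𝔸³(k)`. -/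
theorem cuspidal_cone_two_points_kakeya {k : Type*} [Field k] [IsAlgClosed k]
    (d : ℕ) (hd : 3 ≤ d)
    (g : MvPolynomial (Fin 3) k) (hg : g = X 1 ^ (d - 1) * X 2 - X 0 ^ d) :
    Irreducible g ∧ g.totalDegree = d ∧
      IsKakeya (({![0, 0, 0], ![0, 0, 1]} : Set (Fin 3 → k)) ∪
        {x : Fin 3 → k | eval x g ≠ 0}) := by
  obtain ⟨e, rfl⟩ : ∃ e, d = e + 1 := ⟨d - 1, by omega⟩
  have he : e + 1 - 1 = e := by omega
  rw [he] at hg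
  have he2 : 2 ≤ e := by omega
  -- evaluation formula
  have heval : ∀ x : Fin 3 → k, eval x g = x 1 ^ e * x 2 - x 0 ^ (e + 1) := by
    intro x; simp [hg]
  refine ⟨?_, ?_, ?_⟩
  · -- irreducibility
    have hswap : rename (Equiv.swap (0 : Fin 3) 2) g
        = X 1 ^ e * X 0 - X 2 ^ (e + 1) := by
      rw [hg]
      simp [Equiv.swap_apply_def]
    have himg : (finSuccEquiv k 2) (rename (Equiv.swap (0 : Fin 3) 2) g)
        = Polynomial.C (X 0 ^ e) * Polynomial.X + Polynomial.C (-(X 1 ^ (e + 1))) := by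
      rw [hswap]
      rw [show (1 : Fin 3) = Fin.succ 0 from rfl, show (2 : Fin 3) = Fin.succ 1 from rfl]
      rw [map_sub, map_mul, map_pow, map_pow, finSuccEquiv_X_zero, finSuccEquiv_X_succ, finSuccEquiv_X_succ]
      rw [← map_pow, ← map_pow, sub_eq_add_neg, ← map_neg]
    have hirr : Irreducible ((finSuccEquiv k 2) (rename (Equiv.swap (0 : Fin 3) 2) g)) := by
      rw [himg]
      refine linear_irreducible_aux (pow_ne_zero e (X_ne_zero (0 : Fin 2))) ?_
      intro r hr0 hr1
      exact coprime_aux r hr0 ((dvd_neg).1 hr1)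
    have h1 : Irreducible (rename (Equiv.swap (0 : Fin 3) 2) g) :=
      (MulEquiv.irreducible_iff (finSuccEquiv k 2).toMulEquiv).1 hirr
    exact (MulEquiv.irreducible_iff
      (renameEquiv k (Equiv.swap (0 : Fin 3) 2)).toMulEquiv).1 h1
  · -- total degree
    refine le_antisymm ?_ ?_
    · rw [hg, sub_eq_add_neg]
      refine (totalDegree_add _ _).trans (max_le ?_ ?_)
      · refine (totalDegree_mul _ _).trans ?_
        rw [totalDegree_X_pow, totalDegree_X]
      · rw [totalDegree_neg, totalDegree_X_pow]
    · have hcoeff : coeff (Finsupp.single 0 (e + 1)) g = -1 := by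
        rw [hg, coeff_sub, X_pow_eq_monomial, X_pow_eq_monomial,
          show (X 2 : MvPolynomial (Fin 3) k) = monomial (Finsupp.single 2 1) 1 from rfl,
          monomial_mul, one_mul, coeff_monomial, coeff_monomial]
        rw [if_neg, if_pos rfl]
        · ring
        · intro h
          have := DFunLike.congr_fun h (2 : Fin 3)
          simp [Finsupp.single_apply] at this
      have hmem : Finsupp.single (0 : Fin 3) (e + 1) ∈ g.support := by
        rw [mem_support_iff, hcoeff]
        exact neg_ne_zero.2 one_ne_zero
      have := le_totalDegree hmem
      rwa [Finsupp.sum_single_index rfl] at this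
  · -- Kakeya
    intro v hv
    have hzero : (![0, 0, 0] : Fin 3 → k) = 0 := by
      funext i; fin_cases i <;> rfl
    by_cases hgv : eval v g = 0
    · by_cases hb : v 1 = 0
      · -- v = (0,0,c) with c ≠ 0
        have ha : v 0 = 0 := by
          rw [heval v, hb, zero_pow (by omega : e ≠ 0), zero_mul, zero_sub,
            neg_eq_zero] at hgv
          exact pow_eq_zero_iff (by omega : e + 1 ≠ 0) |>.1 hgv
        refine ⟨![1, 0, 0], fun t => Or.inr ?_⟩
        show eval _ g ≠ 0
        rw [heval]
        have h0 : ((![1, 0, 0] : Fin 3 → k) + t • v) 0 = 1 := by simp [ha]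
        have h1 : ((![1, 0, 0] : Fin 3 → k) + t • v) 1 = 0 := by simp [hb]
        rw [h0, h1, zero_pow (by omega : e ≠ 0), zero_mul, one_pow, zero_sub]
        exact neg_ne_zero.2 one_ne_zero
      · -- v on the cone with v 1 ≠ 0 : line through (0,0,1)
        refine ⟨![0, 0, 1], fun t => ?_⟩
        by_cases ht : t = 0
        · subst ht
          left; right
          simp
        · right
          show eval _ g ≠ 0
          rw [heval]
          have h0 : ((![0, 0, 1] : Fin 3 → k) + t • v) 0 = t * v 0 := by simp
          have h1 : ((![0, 0, 1] : Fin 3 → k) + t • v) 1 = t * v 1 := by simp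
          have h2 : ((![0, 0, 1] : Fin 3 → k) + t • v) 2 = 1 + t * v 2 := by simp
          rw [h0, h1, h2]
          have hkey : (t * v 1) ^ e * (1 + t * v 2) - (t * v 0) ^ (e + 1)
              = t ^ e * v 1 ^ e := by
            rw [heval v] at hgv
            linear_combination t ^ (e + 1) * hgv
          rw [hkey]
          exact mul_ne_zero (pow_ne_zero _ ht) (pow_ne_zero _ hb)
    · -- g(v) ≠ 0 : line through the origin
      refine ⟨0, fun t => ?_⟩
      by_cases ht : t = 0
      · subst ht
        left; left
        simp [hzero]
      · right
        show eval _ g ≠ 0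
        rw [heval]
        have h0 : ∀ i, (0 + t • v) i = t * v i := by intro i; simp
        rw [h0, h0, h0]
        have hkey : (t * v 1) ^ e * (t * v 2) - (t * v 0) ^ (e + 1)
            = t ^ (e + 1) * (v 1 ^ e * v 2 - v 0 ^ (e + 1)) := by ring
        rw [hkey, ← heval v]
        exact mul_ne_zero (pow_ne_zero _ ht) hgv
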